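/- Weighted cross-covariance inequality (Appendix Lemma, key inequality): Let m, n be positive integers, P an m×m symmetric positive definite matrix, Q an n×n symmetric positive definite matrix, and let X, Y be random vectors in ℝ^m and ℝ^n on a common probability space with E[‖X‖²] < ∞ and E[‖Y‖²] < ∞. Then ‖E[XYᵀ]‖_{Q,P} ≤ λmin(Q)⁻¹·(Tr Q)^{1/2}·(Tr P)^{1/2}·‖E[XXᵀ]‖_P^{1/2}·‖E[YYᵀ]‖_Q^{1/2}, where λmin(Q) is the smallest eigenvalue of Q. -/

import Mathlib

open MeasureTheory Matrix

noncomputable section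

/-- The `Q`-weighted norm `‖x‖_Q = (xᵀ Q x)^{1/2}`. -/
def qNorm {n : ℕ} (Q : Matrix (Fin n) (Fin n) ℝ) (x : Fin n → ℝ) : ℝ :=
  Real.sqrt (dotProduct x (Q.mulVec x))

/-- The weighted operator norm `‖M‖_{Q,P} = max { ‖M x‖_P : ‖x‖_Q = 1 }`
(source norm `Q`, target norm `P`). -/
def qOpNorm {m n : ℕ} (P : Matrix (Fin m) (Fin m) ℝ)
    (Q : Matrix (Fin n) (Fin n) ℝ) (M : Matrix (Fin m) (Fin n) ℝ) : ℝ :=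
  sSup {c | ∃ x : Fin n → ℝ, qNorm Q x = 1 ∧ c = qNorm P (M.mulVec x)}

/-- Smallest Rayleigh quotient (for a symmetric matrix, the smallest eigenvalue). -/
def lamMin {n : ℕ} (Q : Matrix (Fin n) (Fin n) ℝ) : ℝ :=
  sInf {r | ∃ v : EuclideanSpace ℝ (Fin n), ‖v‖ = 1 ∧
    r = dotProduct (fun i => v i) (Q.mulVec fun i => v i)}

/-- The matrix `E[X Yᵀ]` of expectations of the outer product of two random vectors. -/
def covMatrix {Ω : Type} [MeasurableSpace Ω] (Pr : Measure Ω) {d e : ℕ}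
    (X : Ω → EuclideanSpace ℝ (Fin d)) (Y : Ω → EuclideanSpace ℝ (Fin e)) :
    Matrix (Fin d) (Fin e) ℝ :=
  Matrix.of fun i j => ∫ ω, X ω i * Y ω j ∂Pr

section MatAux

variable {k : ℕ} {M : Matrix (Fin k) (Fin k) ℝ}

lemma dp_nonneg (hM : M.PosSemidef) (x : Fin k → ℝ) : 0 ≤ x ⬝ᵥ M *ᵥ x := by
  simpa using hM.dotProduct_mulVec_nonneg x

lemma psd_entry_symm (hM : M.IsHermitian) (i j : Fin k) : M i j = M j i := by
  have h := congrFun (congrFun hM.symm j) i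
  simpa [Matrix.conjTranspose_apply] using h.symm

lemma dp_symm (hM : M.IsHermitian) (u v : Fin k → ℝ) :
    u ⬝ᵥ M *ᵥ v = v ⬝ᵥ M *ᵥ u := by
  simp only [dotProduct, Matrix.mulVec, Finset.mul_sum]
  rw [Finset.sum_comm]
  refine Finset.sum_congr rfl fun j _ => Finset.sum_congr rfl fun i _ => ?_
  rw [psd_entry_symm hM i j]; ring

lemma psd_cs (hM : M.PosSemidef) (u v : Fin k → ℝ) :
    (u ⬝ᵥ M *ᵥ v) ^ 2 ≤ (u ⬝ᵥ M *ᵥ u) * (v ⬝ᵥ M *ᵥ v) := by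
  have key : ∀ t : ℝ, 0 ≤ (v ⬝ᵥ M *ᵥ v) * (t * t) + (2 * (u ⬝ᵥ M *ᵥ v)) * t + (u ⬝ᵥ M *ᵥ u) := by
    intro t
    have h0 := dp_nonneg hM (u + t • v)
    have hsym : v ⬝ᵥ M *ᵥ u = u ⬝ᵥ M *ᵥ v := dp_symm hM.1 v u
    have hexp : (u + t • v) ⬝ᵥ M *ᵥ (u + t • v)
        = (v ⬝ᵥ M *ᵥ v) * (t * t) + (2 * (u ⬝ᵥ M *ᵥ v)) * t + (u ⬝ᵥ M *ᵥ u) := by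
      simp only [Matrix.mulVec_add, Matrix.mulVec_smul, dotProduct_add,
        add_dotProduct, dotProduct_smul, smul_dotProduct, smul_eq_mul]
      rw [hsym]; ring
    linarith [hexp ▸ h0]
  have hd := discrim_le_zero key
  rw [discrim] at hd
  nlinarith [hd]

lemma qNorm_nonneg (Q : Matrix (Fin k) (Fin k) ℝ) (x : Fin k → ℝ) : 0 ≤ qNorm Q x :=
  Real.sqrt_nonneg _

lemma qNorm_sq (hM : M.PosSemidef) (x : Fin k → ℝ) : qNorm M x ^ 2 = x ⬝ᵥ M *ᵥ x := by
  rw [qNorm, Real.sq_sqrt (dp_nonneg hM x)]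

lemma qNorm_smul (Q : Matrix (Fin k) (Fin k) ℝ) (c : ℝ) (x : Fin k → ℝ) :
    qNorm Q (c • x) = |c| * qNorm Q x := by
  have h : (c • x) ⬝ᵥ Q *ᵥ (c • x) = (c * c) * (x ⬝ᵥ Q *ᵥ x) := by
    simp only [Matrix.mulVec_smul, dotProduct_smul, smul_dotProduct, smul_eq_mul]
    ring
  rw [qNorm, qNorm, h, Real.sqrt_mul (mul_self_nonneg c), Real.sqrt_mul_self_eq_abs]

lemma dp_le_qNorm_mul (hM : M.PosSemidef) (u v : Fin k → ℝ) :
    u ⬝ᵥ M *ᵥ v ≤ qNorm M u * qNorm M v := by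
  have h2 : u ⬝ᵥ M *ᵥ v ≤ Real.sqrt ((u ⬝ᵥ M *ᵥ u) * (v ⬝ᵥ M *ᵥ v)) := by
    calc u ⬝ᵥ M *ᵥ v ≤ |u ⬝ᵥ M *ᵥ v| := le_abs_self _
      _ = Real.sqrt ((u ⬝ᵥ M *ᵥ v) ^ 2) := (Real.sqrt_sq_eq_abs _).symm
      _ ≤ _ := Real.sqrt_le_sqrt (psd_cs hM u v)
  rwa [Real.sqrt_mul (dp_nonneg hM u)] at h2

lemma qNorm_add_le (hM : M.PosSemidef) (u v : Fin k → ℝ) :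
    qNorm M (u + v) ≤ qNorm M u + qNorm M v := by
  have hexp : (u + v) ⬝ᵥ M *ᵥ (u + v)
      = (u ⬝ᵥ M *ᵥ u) + 2 * (u ⬝ᵥ M *ᵥ v) + (v ⬝ᵥ M *ᵥ v) := by
    have hsym : v ⬝ᵥ M *ᵥ u = u ⬝ᵥ M *ᵥ v := dp_symm hM.1 v u
    simp only [Matrix.mulVec_add, dotProduct_add, add_dotProduct]
    rw [hsym]; ring
  have hle : (u + v) ⬝ᵥ M *ᵥ (u + v) ≤ (qNorm M u + qNorm M v) ^ 2 := by
    rw [hexp]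
    have h1 := dp_le_qNorm_mul hM u v
    have h2 := qNorm_sq hM u
    have h3 := qNorm_sq hM v
    nlinarith
  calc qNorm M (u + v) = Real.sqrt ((u + v) ⬝ᵥ M *ᵥ (u + v)) := rfl
    _ ≤ Real.sqrt ((qNorm M u + qNorm M v) ^ 2) := Real.sqrt_le_sqrt hle
    _ = qNorm M u + qNorm M v := Real.sqrt_sq (by have := qNorm_nonneg M u; have := qNorm_nonneg M v; positivity)

lemma qNorm_zero (Q : Matrix (Fin k) (Fin k) ℝ) : qNorm Q 0 = 0 := by
  simp [qNorm]

lemma qNorm_sum_le {ι : Type*} (hM : M.PosSemidef) (s : Finset ι) (f : ι → Fin k → ℝ) :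
    qNorm M (∑ j ∈ s, f j) ≤ ∑ j ∈ s, qNorm M (f j) := by
  classical
  induction s using Finset.cons_induction with
  | empty => simp [qNorm_zero]
  | cons a s ha ih =>
    rw [Finset.sum_cons, Finset.sum_cons]
    exact (qNorm_add_le hM _ _).trans (by linarith)

end MatAux

section LamMin

variable {k : ℕ} {Q : Matrix (Fin k) (Fin k) ℝ}

lemma continuous_dp {α : Type*} [TopologicalSpace α] {f g : α → Fin k → ℝ}
    (hf : Continuous f) (hg : Continuous g) : Continuous fun a => f a ⬝ᵥ g a := by
  simp only [dotProduct]
  exact continuous_finset_sum _ fun i _ =>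
    ((continuous_apply i).comp hf).mul ((continuous_apply i).comp hg)

lemma continuous_mulVec {l : ℕ} {α : Type*} [TopologicalSpace α]
    (M : Matrix (Fin l) (Fin k) ℝ) {f : α → Fin k → ℝ} (hf : Continuous f) :
    Continuous fun a => M *ᵥ f a := by
  refine continuous_pi fun i => ?_
  have : (fun a => (M *ᵥ f a) i) = fun a => (fun j => M i j) ⬝ᵥ f a := rfl
  rw [this]
  exact continuous_dp continuous_const hf

lemma lamMin_nonneg (hQ : Q.PosDef) : 0 ≤ lamMin Q := by
  apply Real.sInf_nonneg
  rintro r ⟨v, hv, rfl⟩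
  exact dp_nonneg hQ.posSemidef _

lemma dp_self_nonneg (v : Fin k → ℝ) : 0 ≤ v ⬝ᵥ v :=
  Finset.sum_nonneg fun i _ => mul_self_nonneg _

lemma lamMin_le_dp (hQ : Q.PosDef) (v : Fin k → ℝ) :
    lamMin Q * (v ⬝ᵥ v) ≤ v ⬝ᵥ Q *ᵥ v := by
  rcases eq_or_ne v 0 with rfl | hv
  · simp
  · set w : EuclideanSpace ℝ (Fin k) := (WithLp.equiv 2 _).symm v with hw
    have hwv : ∀ i, w i = v i := fun i => rfl
    have hw0 : w ≠ 0 := by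
      intro h; apply hv; funext i
      have := congrFun (congrArg (fun z : EuclideanSpace ℝ (Fin k) => (z : Fin k → ℝ)) h) i
      simpa [hwv] using this
    have hc : 0 < ‖w‖ := norm_pos_iff.2 hw0
    set c : ℝ := ‖w‖ with hcdef
    have hc2 : c ^ 2 = v ⬝ᵥ v := by
      rw [hcdef, EuclideanSpace.norm_eq, Real.sq_sqrt (Finset.sum_nonneg fun i _ => by positivity)]
      simp [dotProduct, hwv, Real.norm_eq_abs, sq_abs, pow_two]
    set u : EuclideanSpace ℝ (Fin k) := c⁻¹ • w with hu
    have hun : ‖u‖ = 1 := by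
      rw [hu, norm_smul, norm_inv, Real.norm_eq_abs, abs_of_pos hc, inv_mul_cancel₀ hc.ne']
    have hui : ∀ i, u i = c⁻¹ * v i := fun i => rfl
    have hmem : (fun i => u i) ⬝ᵥ Q *ᵥ (fun i => u i) ∈
        {r | ∃ v : EuclideanSpace ℝ (Fin k), ‖v‖ = 1 ∧
          r = dotProduct (fun i => v i) (Q.mulVec fun i => v i)} := ⟨u, hun, rfl⟩
    have hbdd : BddBelow {r | ∃ v : EuclideanSpace ℝ (Fin k), ‖v‖ = 1 ∧
        r = dotProduct (fun i => v i) (Q.mulVec fun i => v i)} :=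
      ⟨0, by rintro r ⟨v', _, rfl⟩; exact dp_nonneg hQ.posSemidef _⟩
    have hle : lamMin Q ≤ (fun i => u i) ⬝ᵥ Q *ᵥ (fun i => u i) := csInf_le hbdd hmem
    have hqu : (fun i => u i) ⬝ᵥ Q *ᵥ (fun i => u i) = c⁻¹ * c⁻¹ * (v ⬝ᵥ Q *ᵥ v) := by
      have : (fun i => u i) = c⁻¹ • v := by funext i; simp [hui i]
      rw [this]
      simp only [Matrix.mulVec_smul, dotProduct_smul, smul_dotProduct, smul_eq_mul]
      ring
    rw [hqu] at hle
    have h1 : c * c⁻¹ = 1 := mul_inv_cancel₀ hc.ne'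
    have h2 : lamMin Q * c ^ 2 ≤ (c⁻¹ * c⁻¹ * (v ⬝ᵥ Q *ᵥ v)) * c ^ 2 :=
      mul_le_mul_of_nonneg_right hle (sq_nonneg c)
    have h3 : (c⁻¹ * c⁻¹ * (v ⬝ᵥ Q *ᵥ v)) * c ^ 2 = (c * c⁻¹) * (c * c⁻¹) * (v ⬝ᵥ Q *ᵥ v) := by
      ring
    rw [h3, h1, one_mul, one_mul, hc2] at h2
    exact h2

lemma lamMin_pos (hk : 0 < k) (hQ : Q.PosDef) : 0 < lamMin Q := by
  have hcont : Continuous fun v : EuclideanSpace ℝ (Fin k) =>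
      (fun i => v i) ⬝ᵥ Q *ᵥ (fun i => v i) := by
    have hcoord : Continuous fun v : EuclideanSpace ℝ (Fin k) => (fun i => v i : Fin k → ℝ) :=
      continuous_pi fun i => (EuclideanSpace.proj (𝕜 := ℝ) i).continuous
    exact continuous_dp hcoord (continuous_mulVec Q hcoord)
  haveI : Nontrivial (EuclideanSpace ℝ (Fin k)) := by
    refine ⟨EuclideanSpace.single ⟨0, hk⟩ (1 : ℝ), 0, fun h => ?_⟩
    have := congrArg (fun v : EuclideanSpace ℝ (Fin k) => v ⟨0, hk⟩) h
    simp [EuclideanSpace.single_apply] at this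
  have hsph : IsCompact (Metric.sphere (0 : EuclideanSpace ℝ (Fin k)) 1) :=
    isCompact_sphere _ _
  have hne : (Metric.sphere (0 : EuclideanSpace ℝ (Fin k)) 1).Nonempty :=
    NormedSpace.sphere_nonempty.2 zero_le_one
  obtain ⟨v0, hv0mem, hv0min'⟩ := hsph.exists_isMinOn hne hcont.continuousOn
  have hv0min := isMinOn_iff.1 hv0min'
  have hv0 : ‖v0‖ = 1 := by simpa using hv0mem
  have hv0ne : (fun i => v0 i : Fin k → ℝ) ≠ 0 := by
    intro h
    have : v0 = 0 := by ext i; exact congrFun h i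
    rw [this] at hv0; simp at hv0
  have hpos : 0 < (fun i => v0 i) ⬝ᵥ Q *ᵥ (fun i => v0 i) := by
    simpa using hQ.dotProduct_mulVec_pos hv0ne
  refine lt_of_lt_of_le hpos (le_csInf ⟨_, ⟨v0, hv0, rfl⟩⟩ ?_)
  rintro r ⟨v, hv, rfl⟩
  exact hv0min v (by simp [hv])

end LamMin

section OpNorm

variable {m n : ℕ} (P : Matrix (Fin m) (Fin m) ℝ) {Q : Matrix (Fin n) (Fin n) ℝ}

lemma qOpNorm_bddAbove (hn : 0 < n) (hQ : Q.PosDef) (M : Matrix (Fin m) (Fin n) ℝ) :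
    BddAbove {c | ∃ x : Fin n → ℝ, qNorm Q x = 1 ∧ c = qNorm P (M.mulVec x)} := by
  have hset : {c | ∃ x : Fin n → ℝ, qNorm Q x = 1 ∧ c = qNorm P (M.mulVec x)}
      = (fun x => qNorm P (M.mulVec x)) '' {x : Fin n → ℝ | qNorm Q x = 1} := by
    ext c; constructor
    · rintro ⟨x, hx, rfl⟩; exact ⟨x, hx, rfl⟩
    · rintro ⟨x, hx, rfl⟩; exact ⟨x, hx, rfl⟩
  have hlam := lamMin_pos hn hQ
  have hKcl : IsClosed {x : Fin n → ℝ | qNorm Q x = 1} :=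
    isClosed_eq (Real.continuous_sqrt.comp (continuous_dp continuous_id
      (continuous_mulVec Q continuous_id))) continuous_const
  have hKbd : Bornology.IsBounded {x : Fin n → ℝ | qNorm Q x = 1} := by
    rw [Metric.isBounded_iff_subset_closedBall 0]
    refine ⟨Real.sqrt (lamMin Q)⁻¹, fun x hx => ?_⟩
    have hx1 : x ⬝ᵥ Q *ᵥ x = 1 := by
      have := congrArg (fun t => t ^ 2) (Set.mem_setOf.1 hx)
      simpa [qNorm, Real.sq_sqrt (dp_nonneg hQ.posSemidef x)] using this
    have hdp : x ⬝ᵥ x ≤ (lamMin Q)⁻¹ := by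
      have h2 := lamMin_le_dp hQ x
      rw [hx1] at h2
      have h3 : lamMin Q * (lamMin Q)⁻¹ = 1 := mul_inv_cancel₀ hlam.ne'
      nlinarith
    simp only [Metric.mem_closedBall, dist_zero_right]
    rw [pi_norm_le_iff_of_nonneg (Real.sqrt_nonneg _)]
    intro i
    rw [Real.norm_eq_abs, ← Real.sqrt_sq_eq_abs]
    apply Real.sqrt_le_sqrt
    calc x i ^ 2 = x i * x i := pow_two (x i)
      _ ≤ x ⬝ᵥ x := Finset.single_le_sum (f := fun j => x j * x j)
            (fun j _ => mul_self_nonneg _) (Finset.mem_univ i)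
      _ ≤ (lamMin Q)⁻¹ := hdp
  rw [hset]
  exact ((Metric.isCompact_of_isClosed_isBounded hKcl hKbd).image_of_continuousOn
    ((Real.continuous_sqrt.comp (continuous_dp (continuous_mulVec M continuous_id)
      (continuous_mulVec P (continuous_mulVec M continuous_id)))).continuousOn)).bddAbove

lemma qNorm_mulVec_le (hn : 0 < n) (hQ : Q.PosDef) (M : Matrix (Fin m) (Fin n) ℝ)
    (v : Fin n → ℝ) : qNorm P (M *ᵥ v) ≤ qOpNorm P Q M * qNorm Q v := by
  rcases eq_or_ne v 0 with rfl | hv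
  · simp [qNorm_zero, Matrix.mulVec_zero]
  · have hc : 0 < qNorm Q v := Real.sqrt_pos.2 (by simpa using hQ.dotProduct_mulVec_pos hv)
    set c := qNorm Q v with hcdef
    have hu : qNorm Q (c⁻¹ • v) = 1 := by
      rw [qNorm_smul, abs_of_pos (inv_pos.2 hc), inv_mul_cancel₀ hc.ne']
    have hle := le_csSup (qOpNorm_bddAbove P hn hQ M) ⟨c⁻¹ • v, hu, rfl⟩
    rw [Matrix.mulVec_smul, qNorm_smul, abs_of_pos (inv_pos.2 hc)] at hle
    calc qNorm P (M *ᵥ v) = c * (c⁻¹ * qNorm P (M *ᵥ v)) := by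
          rw [← mul_assoc, mul_inv_cancel₀ hc.ne', one_mul]
      _ ≤ c * qOpNorm P Q M := by
          exact mul_le_mul_of_nonneg_left hle hc.le
      _ = qOpNorm P Q M * c := mul_comm _ _

lemma qOpNorm_nonneg (hn : 0 < n) (hQ : Q.PosDef) (M : Matrix (Fin m) (Fin n) ℝ) :
    0 ≤ qOpNorm P Q M := by
  set e : Fin n → ℝ := Pi.single ⟨0, hn⟩ 1 with he
  have hene : e ≠ 0 := by
    intro h
    have := congrFun h ⟨0, hn⟩
    simp [he] at this
  have hc : 0 < qNorm Q e := Real.sqrt_pos.2 (by simpa using hQ.dotProduct_mulVec_pos hene)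
  have hu : qNorm Q ((qNorm Q e)⁻¹ • e) = 1 := by
    rw [qNorm_smul, abs_of_pos (inv_pos.2 hc), inv_mul_cancel₀ hc.ne']
  exact le_trans (qNorm_nonneg _ _) (le_csSup (qOpNorm_bddAbove P hn hQ M) ⟨_, hu, rfl⟩)

end OpNorm

section Integral

variable {Ω : Type} [MeasurableSpace Ω] {Pr : Measure Ω} [IsProbabilityMeasure Pr]

lemma integrable_mul_L2 {f g : Ω → ℝ} (hf : MemLp f 2 Pr) (hg : MemLp g 2 Pr) :
    Integrable (fun ω => f ω * g ω) Pr := by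
  have h := hf.integrable_sq.add hg.integrable_sq
  refine h.mono' (hf.1.mul hg.1) (Filter.Eventually.of_forall fun ω => ?_)
  rw [Real.norm_eq_abs, abs_mul]
  simp only [Pi.add_apply]
  nlinarith [sq_nonneg (|f ω| - |g ω|), sq_abs (f ω), sq_abs (g ω),
    abs_nonneg (f ω), abs_nonneg (g ω)]

lemma integral_mul_le_sqrt {f g : Ω → ℝ} (hf : MemLp f 2 Pr) (hg : MemLp g 2 Pr) :
    ∫ ω, f ω * g ω ∂Pr ≤
      Real.sqrt (∫ ω, f ω * f ω ∂Pr) * Real.sqrt (∫ ω, g ω * g ω ∂Pr) := by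
  set a := ∫ ω, g ω * g ω ∂Pr with ha
  set b := ∫ ω, f ω * g ω ∂Pr with hb
  set c := ∫ ω, f ω * f ω ∂Pr with hc
  have hann : 0 ≤ a := integral_nonneg fun ω => mul_self_nonneg _
  have hcnn : 0 ≤ c := integral_nonneg fun ω => mul_self_nonneg _
  have key : ∀ t : ℝ, 0 ≤ a * (t * t) + (2 * b) * t + c := by
    intro t
    have hint : ∫ ω, (f ω + t * g ω) * (f ω + t * g ω) ∂Pr = a * (t * t) + (2 * b) * t + c := by
      have h1 : ∀ ω, (f ω + t * g ω) * (f ω + t * g ω)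
          = f ω * f ω + (2 * t) * (f ω * g ω) + (t * t) * (g ω * g ω) := fun ω => by ring
      simp_rw [h1]
      have i1 : Integrable (fun ω => f ω * f ω + 2 * t * (f ω * g ω)) Pr :=
        (integrable_mul_L2 hf hf).add ((integrable_mul_L2 hf hg).const_mul _)
      have i2 : Integrable (fun ω => t * t * (g ω * g ω)) Pr :=
        (integrable_mul_L2 hg hg).const_mul _
      have i3 : Integrable (fun ω => f ω * f ω) Pr := integrable_mul_L2 hf hf
      have i4 : Integrable (fun ω => 2 * t * (f ω * g ω)) Pr :=
        (integrable_mul_L2 hf hg).const_mul _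
      rw [integral_add i1 i2, integral_add i3 i4, integral_const_mul, integral_const_mul]
      rw [← ha, ← hb, ← hc]; ring
    rw [← hint]
    exact integral_nonneg fun ω => mul_self_nonneg _
  have hd := discrim_le_zero key
  rw [discrim] at hd
  calc b ≤ |b| := le_abs_self _
    _ = Real.sqrt (b ^ 2) := (Real.sqrt_sq_eq_abs _).symm
    _ ≤ Real.sqrt (c * a) := Real.sqrt_le_sqrt (by nlinarith)
    _ = Real.sqrt c * Real.sqrt a := Real.sqrt_mul hcnn a

lemma memL2_comp {d : ℕ} {X : Ω → EuclideanSpace ℝ (Fin d)} (hX : MemLp X 2 Pr) (i : Fin d) :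
    MemLp (fun ω => X ω i) 2 Pr := by
  have := (EuclideanSpace.proj (𝕜 := ℝ) i).comp_memLp' hX
  exact this

lemma memL2_dp {d : ℕ} {X : Ω → EuclideanSpace ℝ (Fin d)} (hX : MemLp X 2 Pr) (w : Fin d → ℝ) :
    MemLp (fun ω => w ⬝ᵥ (fun i => X ω i)) 2 Pr := by
  have : (fun ω => w ⬝ᵥ (fun i => X ω i)) = fun ω => ∑ i, w i * X ω i := rfl
  rw [this]
  have h := memLp_finset_sum' Finset.univ
    (fun i (_ : i ∈ Finset.univ) => (memL2_comp hX i).const_mul (w i))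
  have heq : (∑ i : Fin d, fun ω => w i * X ω i) = fun ω => ∑ i : Fin d, w i * X ω i := by
    funext ω; simp
  rwa [heq] at h

lemma integrable_quad {d : ℕ} {X : Ω → EuclideanSpace ℝ (Fin d)} (hX : MemLp X 2 Pr)
    (R : Matrix (Fin d) (Fin d) ℝ) :
    Integrable (fun ω => (fun i => X ω i) ⬝ᵥ R *ᵥ (fun i => X ω i)) Pr := by
  have h1 : (fun ω => (fun i => X ω i) ⬝ᵥ R *ᵥ (fun i => X ω i))
      = fun ω => ∑ i, ∑ k, R i k * (X ω i * X ω k) := by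
    funext ω
    simp only [dotProduct, Matrix.mulVec, Finset.mul_sum]
    exact Finset.sum_congr rfl fun i _ => Finset.sum_congr rfl fun k _ => by ring
  rw [h1]
  exact integrable_finset_sum _ fun i _ => integrable_finset_sum _ fun k _ =>
    (integrable_mul_L2 (memL2_comp hX i) (memL2_comp hX k)).const_mul _

lemma diag_nonneg {d : ℕ} {R : Matrix (Fin d) (Fin d) ℝ} (hR : R.PosSemidef) (i : Fin d) :
    0 ≤ R i i := by
  have := dp_nonneg hR (Pi.single i 1)
  simpa [Matrix.mulVec_single, single_dotProduct] using this

lemma quad_integral_le {d : ℕ} (hd : 0 < d) {R : Matrix (Fin d) (Fin d) ℝ} (hR : R.PosDef)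
    {X : Ω → EuclideanSpace ℝ (Fin d)} (hX : MemLp X 2 Pr) :
    ∫ ω, (fun i => X ω i) ⬝ᵥ R *ᵥ (fun i => X ω i) ∂Pr
      ≤ Matrix.trace R * qOpNorm R R (covMatrix Pr X X) := by
  classical
  set A := covMatrix Pr X X with hA
  have hAentry : ∀ i k, A i k = ∫ ω, X ω i * X ω k ∂Pr := fun i k => rfl
  have hAsymm : ∀ i k, A i k = A k i := by
    intro i k; rw [hAentry, hAentry]
    simp_rw [mul_comm]
  have hswap : ∫ ω, (fun i => X ω i) ⬝ᵥ R *ᵥ (fun i => X ω i) ∂Pr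
      = ∑ i, ∑ k, R i k * A i k := by
    have hfun : (fun ω => (fun i => X ω i) ⬝ᵥ R *ᵥ (fun i => X ω i))
        = fun ω => ∑ i, ∑ k, R i k * (X ω i * X ω k) := by
      funext ω
      simp only [dotProduct, Matrix.mulVec, Finset.mul_sum]
      exact Finset.sum_congr rfl fun i _ => Finset.sum_congr rfl fun k _ => by ring
    rw [hfun, integral_finset_sum _ (fun i _ => integrable_finset_sum _ (fun k _ =>
      (integrable_mul_L2 (memL2_comp hX i) (memL2_comp hX k)).const_mul (R i k)))]
    refine Finset.sum_congr rfl fun i _ => ?_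
    rw [integral_finset_sum _ (fun k _ =>
      (integrable_mul_L2 (memL2_comp hX i) (memL2_comp hX k)).const_mul (R i k))]
    exact Finset.sum_congr rfl fun k _ => by rw [integral_const_mul, hAentry]
  rw [hswap]
  have hper : ∀ i, ∑ k, R i k * A i k ≤ qOpNorm R R A * R i i := by
    intro i
    have h1 : (Pi.single i 1 : Fin d → ℝ) ⬝ᵥ R *ᵥ (A *ᵥ Pi.single i 1)
        = ∑ k, R i k * A i k := by
      rw [Matrix.mulVec_single, single_dotProduct, one_mul]
      simp only [Matrix.mulVec, dotProduct]
      exact Finset.sum_congr rfl fun k _ => by simp [Matrix.col, hAsymm k i]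
    have h2 := dp_le_qNorm_mul hR.posSemidef (Pi.single i 1) (A *ᵥ Pi.single i 1)
    have h3 := qNorm_mulVec_le R hd hR A (Pi.single i 1)
    have h4 : qNorm R (Pi.single i 1 : Fin d → ℝ) ^ 2 = R i i := by
      rw [qNorm_sq hR.posSemidef]
      rw [Matrix.mulVec_single, single_dotProduct]
      simp
    calc ∑ k, R i k * A i k
        = (Pi.single i 1 : Fin d → ℝ) ⬝ᵥ R *ᵥ (A *ᵥ Pi.single i 1) := h1.symm
      _ ≤ qNorm R (Pi.single i 1) * qNorm R (A *ᵥ Pi.single i 1) := h2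
      _ ≤ qNorm R (Pi.single i 1) * (qOpNorm R R A * qNorm R (Pi.single i 1)) :=
          mul_le_mul_of_nonneg_left h3 (qNorm_nonneg _ _)
      _ = qOpNorm R R A * qNorm R (Pi.single i 1) ^ 2 := by ring
      _ = qOpNorm R R A * R i i := by rw [h4]
  calc ∑ i, ∑ k, R i k * A i k ≤ ∑ i, qOpNorm R R A * R i i :=
      Finset.sum_le_sum fun i _ => hper i
    _ = qOpNorm R R A * ∑ i, R i i := by rw [← Finset.mul_sum]
    _ = Matrix.trace R * qOpNorm R R A := by
        rw [Matrix.trace]; simp only [Matrix.diag]; ring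

lemma trace_diag_le {e : ℕ} (he : 0 < e) {R : Matrix (Fin e) (Fin e) ℝ} (hR : R.PosDef)
    {Y : Ω → EuclideanSpace ℝ (Fin e)} (hY : MemLp Y 2 Pr) :
    ∑ j, ∫ ω, Y ω j * Y ω j ∂Pr
      ≤ (lamMin R)⁻¹ * (Matrix.trace R * qOpNorm R R (covMatrix Pr Y Y)) := by
  have hlam := lamMin_pos he hR
  have h1 : ∑ j, ∫ ω, Y ω j * Y ω j ∂Pr
      = ∫ ω, (fun j => Y ω j) ⬝ᵥ (fun j => Y ω j) ∂Pr := by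
    rw [← integral_finset_sum _ (fun j _ =>
      integrable_mul_L2 (memL2_comp hY j) (memL2_comp hY j))]
    rfl
  have hint : Integrable (fun ω => (fun j => Y ω j) ⬝ᵥ (fun j => Y ω j)) Pr := by
    have h : (fun ω => (fun j => Y ω j) ⬝ᵥ (fun j => Y ω j)) = fun ω => ∑ j, Y ω j * Y ω j := rfl
    rw [h]
    exact integrable_finset_sum _ fun j _ =>
      integrable_mul_L2 (memL2_comp hY j) (memL2_comp hY j)
  have h2 : ∫ ω, (fun j => Y ω j) ⬝ᵥ (fun j => Y ω j) ∂Pr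
      ≤ (lamMin R)⁻¹ * ∫ ω, (fun j => Y ω j) ⬝ᵥ R *ᵥ (fun j => Y ω j) ∂Pr := by
    rw [← integral_const_mul]
    refine integral_mono hint ((integrable_quad hY R).const_mul _) fun ω => ?_
    have h3 := lamMin_le_dp hR (fun j => Y ω j)
    have h4 : (fun j => Y ω j) ⬝ᵥ (fun j => Y ω j)
        = (lamMin R)⁻¹ * (lamMin R * ((fun j => Y ω j) ⬝ᵥ (fun j => Y ω j))) := by
      rw [← mul_assoc, inv_mul_cancel₀ hlam.ne', one_mul]
    calc (fun j => Y ω j) ⬝ᵥ (fun j => Y ω j)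
        = (lamMin R)⁻¹ * (lamMin R * ((fun j => Y ω j) ⬝ᵥ (fun j => Y ω j))) := h4
      _ ≤ (lamMin R)⁻¹ * ((fun j => Y ω j) ⬝ᵥ R *ᵥ (fun j => Y ω j)) :=
          mul_le_mul_of_nonneg_left h3 (inv_nonneg.2 hlam.le)
  rw [h1]
  exact h2.trans (mul_le_mul_of_nonneg_left (quad_integral_le he hR hY) (inv_nonneg.2 hlam.le))

lemma col_bound {d e : ℕ} {P : Matrix (Fin d) (Fin d) ℝ} (hP : P.PosDef)
    {X : Ω → EuclideanSpace ℝ (Fin d)} {Y : Ω → EuclideanSpace ℝ (Fin e)}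
    (hX : MemLp X 2 Pr) (hY : MemLp Y 2 Pr) (j : Fin e) :
    qNorm P (covMatrix Pr X Y *ᵥ Pi.single j 1)
      ≤ Real.sqrt (∫ ω, Y ω j * Y ω j ∂Pr)
        * Real.sqrt (∫ ω, (fun i => X ω i) ⬝ᵥ P *ᵥ (fun i => X ω i) ∂Pr) := by
  classical
  set v : Fin d → ℝ := covMatrix Pr X Y *ᵥ Pi.single j 1 with hv
  have hvi : ∀ i, v i = ∫ ω, X ω i * Y ω j ∂Pr := by
    intro i; rw [hv, Matrix.mulVec_single]; simp [covMatrix]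
  have hTPnn : 0 ≤ ∫ ω, (fun i => X ω i) ⬝ᵥ P *ᵥ (fun i => X ω i) ∂Pr :=
    integral_nonneg fun ω => dp_nonneg hP.posSemidef _
  have hfL2 : MemLp (fun ω => (P *ᵥ v) ⬝ᵥ (fun i => X ω i)) 2 Pr := memL2_dp hX (P *ᵥ v)
  have hs : v ⬝ᵥ P *ᵥ v = ∫ ω, ((P *ᵥ v) ⬝ᵥ (fun i => X ω i)) * Y ω j ∂Pr := by
    rw [dotProduct]
    have h1 : ∀ i : Fin d, v i * (P *ᵥ v) i = ∫ ω, (P *ᵥ v) i * (X ω i * Y ω j) ∂Pr := by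
      intro i
      rw [integral_const_mul, hvi i]; ring
    rw [Finset.sum_congr rfl fun i _ => h1 i, ← integral_finset_sum _
      (fun i _ => (integrable_mul_L2 (memL2_comp hX i) (memL2_comp hY j)).const_mul _)]
    refine integral_congr_ae (Filter.Eventually.of_forall fun ω => ?_)
    simp only [dotProduct, Finset.sum_mul]
    exact Finset.sum_congr rfl fun i _ => by ring
  have hq2 : qNorm P v ^ 2 = v ⬝ᵥ P *ᵥ v := qNorm_sq hP.posSemidef v
  have hff : ∫ ω, ((P *ᵥ v) ⬝ᵥ (fun i => X ω i)) * ((P *ᵥ v) ⬝ᵥ (fun i => X ω i)) ∂Pr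
      ≤ (v ⬝ᵥ P *ᵥ v) * ∫ ω, (fun i => X ω i) ⬝ᵥ P *ᵥ (fun i => X ω i) ∂Pr := by
    rw [← integral_const_mul]
    refine integral_mono (integrable_mul_L2 hfL2 hfL2)
      ((integrable_quad hX P).const_mul _) fun ω => ?_
    have hfval : (P *ᵥ v) ⬝ᵥ (fun i => X ω i) = v ⬝ᵥ P *ᵥ (fun i => X ω i) := by
      rw [dotProduct_comm]
      exact dp_symm hP.1 _ _
    calc (P *ᵥ v) ⬝ᵥ (fun i => X ω i) * ((P *ᵥ v) ⬝ᵥ (fun i => X ω i))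
        = (v ⬝ᵥ P *ᵥ (fun i => X ω i)) ^ 2 := by rw [hfval]; ring
      _ ≤ (v ⬝ᵥ P *ᵥ v) * ((fun i => X ω i) ⬝ᵥ P *ᵥ (fun i => X ω i)) :=
          psd_cs hP.posSemidef _ _
  have hcs := integral_mul_le_sqrt hfL2 (memL2_comp hY j)
  have hkey : qNorm P v ^ 2 ≤ qNorm P v *
      (Real.sqrt (∫ ω, Y ω j * Y ω j ∂Pr)
        * Real.sqrt (∫ ω, (fun i => X ω i) ⬝ᵥ P *ᵥ (fun i => X ω i) ∂Pr)) := by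
    calc qNorm P v ^ 2 = v ⬝ᵥ P *ᵥ v := hq2
      _ = ∫ ω, ((P *ᵥ v) ⬝ᵥ (fun i => X ω i)) * Y ω j ∂Pr := hs
      _ ≤ Real.sqrt (∫ ω, ((P *ᵥ v) ⬝ᵥ (fun i => X ω i)) * ((P *ᵥ v) ⬝ᵥ (fun i => X ω i)) ∂Pr)
          * Real.sqrt (∫ ω, Y ω j * Y ω j ∂Pr) := hcs
      _ ≤ Real.sqrt ((v ⬝ᵥ P *ᵥ v) * ∫ ω, (fun i => X ω i) ⬝ᵥ P *ᵥ (fun i => X ω i) ∂Pr)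
          * Real.sqrt (∫ ω, Y ω j * Y ω j ∂Pr) :=
          mul_le_mul_of_nonneg_right (Real.sqrt_le_sqrt hff) (Real.sqrt_nonneg _)
      _ = qNorm P v * (Real.sqrt (∫ ω, Y ω j * Y ω j ∂Pr)
          * Real.sqrt (∫ ω, (fun i => X ω i) ⬝ᵥ P *ᵥ (fun i => X ω i) ∂Pr)) := by
          rw [← hq2, Real.sqrt_mul (sq_nonneg _), Real.sqrt_sq (qNorm_nonneg _ _)]
          ring
  rcases (qNorm_nonneg P v).eq_or_lt with h0 | h0
  · rw [← h0]
    positivity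
  · have h5 : qNorm P v * qNorm P v ≤ qNorm P v *
        (Real.sqrt (∫ ω, Y ω j * Y ω j ∂Pr)
          * Real.sqrt (∫ ω, (fun i => X ω i) ⬝ᵥ P *ᵥ (fun i => X ω i) ∂Pr)) := by
      rw [← pow_two]; exact hkey
    exact le_of_mul_le_mul_left h5 h0

end Integral

/-- **Weighted cross-covariance inequality (Appendix Lemma, key inequality).** -/
theorem weighted_cross_covariance_inequality
    (m n : ℕ) (hm : 0 < m) (hn : 0 < n)
    (P : Matrix (Fin m) (Fin m) ℝ) (Q : Matrix (Fin n) (Fin n) ℝ)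
    (hP : P.PosDef) (hQ : Q.PosDef)
    {Ω : Type} [MeasurableSpace Ω] (Pr : Measure Ω) [IsProbabilityMeasure Pr]
    (X : Ω → EuclideanSpace ℝ (Fin m)) (Y : Ω → EuclideanSpace ℝ (Fin n))
    (hX : MemLp X 2 Pr) (hY : MemLp Y 2 Pr) :
    qOpNorm P Q (covMatrix Pr X Y) ≤
      (lamMin Q)⁻¹ * Real.sqrt (Matrix.trace Q) * Real.sqrt (Matrix.trace P) *
        Real.sqrt (qOpNorm P P (covMatrix Pr X X)) *
        Real.sqrt (qOpNorm Q Q (covMatrix Pr Y Y)) := by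
  classical
  have hlam := lamMin_pos hn hQ
  have hlaminv : (0 : ℝ) ≤ (lamMin Q)⁻¹ := inv_nonneg.2 hlam.le
  have htrPnn : 0 ≤ Matrix.trace P := by
    rw [Matrix.trace]
    exact Finset.sum_nonneg fun i _ => diag_nonneg hP.posSemidef i
  have htrQnn : 0 ≤ Matrix.trace Q := by
    rw [Matrix.trace]
    exact Finset.sum_nonneg fun j _ => diag_nonneg hQ.posSemidef j
  have hTPnn : 0 ≤ ∫ ω, (fun i => X ω i) ⬝ᵥ P *ᵥ (fun i => X ω i) ∂Pr :=
    integral_nonneg fun ω => dp_nonneg hP.posSemidef _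
  have hTPle := quad_integral_le hm hP hX
  have htrBnn : 0 ≤ ∑ j, ∫ ω, Y ω j * Y ω j ∂Pr :=
    Finset.sum_nonneg fun j _ => integral_nonneg fun ω => mul_self_nonneg _
  have htrBle := trace_diag_le hn hQ hY
  have hBjjnn : ∀ j : Fin n, 0 ≤ ∫ ω, Y ω j * Y ω j ∂Pr :=
    fun j => integral_nonneg fun ω => mul_self_nonneg _
  have hRHSnn : 0 ≤ (lamMin Q)⁻¹ * Real.sqrt (Matrix.trace Q) * Real.sqrt (Matrix.trace P) *
      Real.sqrt (qOpNorm P P (covMatrix Pr X X)) *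
      Real.sqrt (qOpNorm Q Q (covMatrix Pr Y Y)) :=
    mul_nonneg (mul_nonneg (mul_nonneg (mul_nonneg hlaminv (Real.sqrt_nonneg _))
      (Real.sqrt_nonneg _)) (Real.sqrt_nonneg _)) (Real.sqrt_nonneg _)
  have hqop : qOpNorm P Q (covMatrix Pr X Y) = sSup {c | ∃ x : Fin n → ℝ,
      qNorm Q x = 1 ∧ c = qNorm P ((covMatrix Pr X Y).mulVec x)} := rfl
  rw [hqop]
  apply Real.sSup_le _ hRHSnn
  rintro b ⟨x, hx1, rfl⟩
  -- decompose M *ᵥ x into columns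
  have hdecomp : covMatrix Pr X Y *ᵥ x
      = ∑ j, x j • (covMatrix Pr X Y *ᵥ Pi.single j 1) := by
    have hx : x = ∑ j, x j • (Pi.single j 1 : Fin n → ℝ) := by
      funext i
      simp [Pi.single_apply]
    conv_lhs => rw [hx]
    simp only [← Matrix.mulVecLin_apply, map_sum]
    exact Finset.sum_congr rfl fun j _ => LinearMap.map_smul _ _ _
  have step1 : qNorm P (covMatrix Pr X Y *ᵥ x)
      ≤ ∑ j, |x j| * qNorm P (covMatrix Pr X Y *ᵥ Pi.single j 1) := by
    rw [hdecomp]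
    refine (qNorm_sum_le hP.posSemidef _ _).trans (le_of_eq ?_)
    exact Finset.sum_congr rfl fun j _ => qNorm_smul P (x j) _
  have step2 : ∀ j, qNorm P (covMatrix Pr X Y *ᵥ Pi.single j 1)
      ≤ Real.sqrt (∫ ω, Y ω j * Y ω j ∂Pr)
        * Real.sqrt (∫ ω, (fun i => X ω i) ⬝ᵥ P *ᵥ (fun i => X ω i) ∂Pr) :=
    fun j => col_bound hP hX hY j
  have step3 : qNorm P (covMatrix Pr X Y *ᵥ x)
      ≤ (∑ j, |x j| * Real.sqrt (∫ ω, Y ω j * Y ω j ∂Pr))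
        * Real.sqrt (∫ ω, (fun i => X ω i) ⬝ᵥ P *ᵥ (fun i => X ω i) ∂Pr) := by
    refine step1.trans ?_
    rw [Finset.sum_mul]
    refine Finset.sum_le_sum fun j _ => ?_
    rw [mul_assoc]
    exact mul_le_mul_of_nonneg_left (step2 j) (abs_nonneg _)
  have hxx : x ⬝ᵥ x ≤ (lamMin Q)⁻¹ := by
    have hx2 : x ⬝ᵥ Q *ᵥ x = 1 := by
      have h := congrArg (fun t : ℝ => t ^ 2) hx1
      simpa [qNorm, Real.sq_sqrt (dp_nonneg hQ.posSemidef x)] using h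
    have h2 := lamMin_le_dp hQ x
    rw [hx2] at h2
    have h3 : lamMin Q * (lamMin Q)⁻¹ = 1 := mul_inv_cancel₀ hlam.ne'
    nlinarith
  have step4 : (∑ j, |x j| * Real.sqrt (∫ ω, Y ω j * Y ω j ∂Pr))
      ≤ Real.sqrt ((lamMin Q)⁻¹ * ∑ j, ∫ ω, Y ω j * Y ω j ∂Pr) := by
    have hcs := Finset.sum_mul_sq_le_sq_mul_sq Finset.univ (fun j => |x j|)
      (fun j => Real.sqrt (∫ ω, Y ω j * Y ω j ∂Pr))
    have h6 : (∑ j, |x j| * Real.sqrt (∫ ω, Y ω j * Y ω j ∂Pr)) ^ 2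
        ≤ (x ⬝ᵥ x) * ∑ j, ∫ ω, Y ω j * Y ω j ∂Pr := by
      refine hcs.trans (le_of_eq ?_)
      congr 1
      · rw [dotProduct]
        exact Finset.sum_congr rfl fun j _ => by rw [sq_abs, pow_two]
      · exact Finset.sum_congr rfl fun j _ => Real.sq_sqrt (hBjjnn j)
    have h7 : (∑ j, |x j| * Real.sqrt (∫ ω, Y ω j * Y ω j ∂Pr))
        ≤ Real.sqrt ((x ⬝ᵥ x) * ∑ j, ∫ ω, Y ω j * Y ω j ∂Pr) := by
      rw [← Real.sqrt_sq (Finset.sum_nonneg fun j _ =>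
        mul_nonneg (abs_nonneg _) (Real.sqrt_nonneg _))]
      exact Real.sqrt_le_sqrt h6
    exact h7.trans (Real.sqrt_le_sqrt (mul_le_mul_of_nonneg_right hxx htrBnn))
  have step5 : qNorm P (covMatrix Pr X Y *ᵥ x)
      ≤ Real.sqrt ((lamMin Q)⁻¹ * ∑ j, ∫ ω, Y ω j * Y ω j ∂Pr)
        * Real.sqrt (∫ ω, (fun i => X ω i) ⬝ᵥ P *ᵥ (fun i => X ω i) ∂Pr) :=
    step3.trans (mul_le_mul_of_nonneg_right step4 (Real.sqrt_nonneg _))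
  have hbnd1 : Real.sqrt ((lamMin Q)⁻¹ * ∑ j, ∫ ω, Y ω j * Y ω j ∂Pr)
      ≤ Real.sqrt ((lamMin Q)⁻¹ *
        ((lamMin Q)⁻¹ * (Matrix.trace Q * qOpNorm Q Q (covMatrix Pr Y Y)))) :=
    Real.sqrt_le_sqrt (mul_le_mul_of_nonneg_left htrBle hlaminv)
  have hbnd2 : Real.sqrt (∫ ω, (fun i => X ω i) ⬝ᵥ P *ᵥ (fun i => X ω i) ∂Pr)
      ≤ Real.sqrt (Matrix.trace P * qOpNorm P P (covMatrix Pr X X)) :=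
    Real.sqrt_le_sqrt hTPle
  have hfinal : qNorm P (covMatrix Pr X Y *ᵥ x)
      ≤ Real.sqrt ((lamMin Q)⁻¹ *
          ((lamMin Q)⁻¹ * (Matrix.trace Q * qOpNorm Q Q (covMatrix Pr Y Y))))
        * Real.sqrt (Matrix.trace P * qOpNorm P P (covMatrix Pr X X)) :=
    step5.trans (mul_le_mul hbnd1 hbnd2 (Real.sqrt_nonneg _) (Real.sqrt_nonneg _))
  refine hfinal.trans (le_of_eq ?_)
  have hBNn : 0 ≤ qOpNorm Q Q (covMatrix Pr Y Y) := qOpNorm_nonneg Q hn hQ _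
  have hANn : 0 ≤ qOpNorm P P (covMatrix Pr X X) := qOpNorm_nonneg P hm hP _
  rw [show (lamMin Q)⁻¹ * ((lamMin Q)⁻¹ * (Matrix.trace Q * qOpNorm Q Q (covMatrix Pr Y Y)))
      = ((lamMin Q)⁻¹ * (lamMin Q)⁻¹) * (Matrix.trace Q * qOpNorm Q Q (covMatrix Pr Y Y))
    by ring]
  rw [Real.sqrt_mul (mul_nonneg hlaminv hlaminv), Real.sqrt_mul_self hlaminv,
    Real.sqrt_mul htrQnn, Real.sqrt_mul htrPnn]
  ring
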